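/- Under the assumptions of the previous setting (identical unit loads of power p, strictly increasing price c, full flexibility), every pure Nash equilibrium of the scheduling game minimizes the social cost ∑_{t∈T} y_t·c(y_t) over all feasible assignments, provided y ↦ y·c(y) is convex; i.e., the price of anarchy is 1. -/

import Mathlib

open Set Finset

/-- A convex function lies above the line through `(A, f A)` and `(B, f B)` outside
the open interval `(A, B)`. -/
lemma chord_le_of_convexOn {f : ℝ → ℝ} (hf : ConvexOn ℝ (Ici 0) f) {A B x : ℝ}
    (hA : 0 ≤ A) (hAB : A < B) (hx : 0 ≤ x) (h : x ≤ A ∨ B ≤ x) :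
    f A + (f B - f A) / (B - A) * (x - A) ≤ f x := by
  have hB : (0:ℝ) ≤ B := le_trans hA hAB.le
  rcases h with h | h
  · rcases eq_or_lt_of_le h with rfl | hlt
    · simp
    · have hs := hf.slope_mono_adjacent (x := x) (y := A) (z := B) hx hB hlt hAB
      have h1 : 0 < A - x := by linarith
      have h2 : 0 < B - A := by linarith
      rw [div_le_div_iff₀ h1 h2] at hs
      have key : (f B - f A) / (B - A) * (x - A) ≤ f x - f A := by
        rw [div_mul_eq_mul_div, div_le_iff₀ h2]
        nlinarith
      linarith
  · rcases eq_or_lt_of_le h with rfl | hlt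
    · have h2 : B - A ≠ 0 := by linarith
      field_simp
      linarith
    · have hs := hf.slope_mono_adjacent (x := A) (y := B) (z := x) hA hx hAB hlt
      have h1 : 0 < x - B := by linarith
      have h2 : 0 < B - A := by linarith
      rw [div_le_div_iff₀ h2 h1] at hs
      have key : (f B - f A) / (B - A) * (x - A) ≤ f x - f A := by
        rw [div_mul_eq_mul_div, div_le_iff₀ h2]
        nlinarith
      linarith

set_option maxHeartbeats 1000000 in
theorem NE_minimizes_social_cost
    (N T : Type*) [Fintype N] [Fintype T] [Nonempty T] [DecidableEq T]
    (p : ℝ) (hp : 0 < p)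
    (c : ℝ → ℝ)
    (hmono : StrictMonoOn c (Ici 0))
    (hconv : ConvexOn ℝ (Ici 0) (fun y => y * c y))
    (σ : N → T)
    (y : (N → T) → T → ℝ)
    (hy : ∀ (τ : N → T) (t : T),
      y τ t = p * ((Finset.univ.filter (fun n : N => τ n = t)).card : ℝ))
    (hNE : ∀ t t' : T, (∃ n, σ n = t) → c (y σ t) ≤ c (y σ t' + p)) :
    ∀ σ' : N → T, ∑ t, y σ t * c (y σ t) ≤ ∑ t, y σ' t * c (y σ' t) := by
  intro σ'
  set k : (N → T) → T → ℕ := fun τ t => (Finset.univ.filter (fun n : N => τ n = t)).card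
    with hk
  have hyk : ∀ (τ : N → T) (t : T), y τ t = p * (k τ t : ℝ) := hy
  -- the fiber counts sum to the number of players, for any assignment
  have hsumk : ∀ τ : N → T, ∑ t, (k τ t : ℝ) = (Fintype.card N : ℝ) := by
    intro τ
    have := Finset.card_eq_sum_card_fiberwise (f := τ) (s := Finset.univ) (t := Finset.univ)
      (fun n _ => mem_univ (τ n))
    rw [Fintype.card, this]
    push_cast
    rfl
  have hsumy : ∀ τ : N → T, ∑ t, y τ t = p * (Fintype.card N : ℝ) := by
    intro τ
    simp only [hyk]
    rw [← Finset.mul_sum, hsumk]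
  -- minimal fiber
  obtain ⟨t0, -, ht0⟩ := Finset.exists_min_image Finset.univ (fun t => k σ t)
    ⟨Classical.arbitrary T, mem_univ _⟩
  set a : ℕ := k σ t0 with ha
  have hlow : ∀ t, a ≤ k σ t := fun t => ht0 t (mem_univ t)
  have hhigh : ∀ t, k σ t ≤ a + 1 := by
    intro t
    rcases Nat.eq_zero_or_pos (k σ t) with h0 | hpos
    · omega
    · have hocc : ∃ n, σ n = t := by
        rw [hk] at hpos
        obtain ⟨n, hn⟩ := Finset.card_pos.mp hpos
        exact ⟨n, (Finset.mem_filter.mp hn).2⟩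
      have hc := hNE t t0 hocc
      have hm1 : y σ t ∈ Ici (0:ℝ) := by
        rw [hyk, Set.mem_Ici]
        exact mul_nonneg hp.le (Nat.cast_nonneg _)
      have hm2 : y σ t0 + p ∈ Ici (0:ℝ) := by
        rw [hyk, Set.mem_Ici]
        positivity
      have hle : y σ t ≤ y σ t0 + p := by
        by_contra hlt
        push_neg at hlt
        exact absurd hc (not_le.mpr (hmono hm2 hm1 hlt))
      rw [hyk, hyk] at hle
      have : (k σ t : ℝ) ≤ (k σ t0 : ℝ) + 1 := by
        rw [← mul_le_mul_iff_right₀ hp]; ring_nf; ring_nf at hle; linarith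
      exact_mod_cast this
  -- the two chord endpoints
  set f : ℝ → ℝ := fun y => y * c y with hf
  set A : ℝ := p * a with hA
  set B : ℝ := p * (a + 1) with hB
  have hA0 : (0:ℝ) ≤ A := by positivity
  have hAB : A < B := by rw [hA, hB]; nlinarith
  set g : ℝ := (f B - f A) / (B - A) with hg
  set L : ℝ → ℝ := fun x => f A + g * (x - A) with hL
  -- equilibrium values lie on the chord
  have hLσ : ∀ t, f (y σ t) = L (y σ t) := by
    intro t
    have h1 := hlow t
    have h2 := hhigh t
    have : k σ t = a ∨ k σ t = a + 1 := by omega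
    rcases this with h | h
    · have : y σ t = A := by rw [hyk, h]
      rw [this, hL]; simp
    · have hyB : y σ t = B := by rw [hyk, h, hB]; push_cast; ring
      have hBA : B - A ≠ 0 := by linarith
      rw [hyB, hL, hg]
      field_simp
      ring
  -- other values lie above the chord
  have hLσ' : ∀ t, L (y σ' t) ≤ f (y σ' t) := by
    intro t
    have hx : (0:ℝ) ≤ y σ' t := by exact (hyk _ _) ▸ mul_nonneg hp.le (Nat.cast_nonneg _)
    have hcase : y σ' t ≤ A ∨ B ≤ y σ' t := by
      rcases le_or_gt (k σ' t) a with h | h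
      · left; rw [hyk, hA]
        have : (k σ' t : ℝ) ≤ (a : ℝ) := by exact_mod_cast h
        nlinarith
      · right; rw [hyk, hB]
        have : (a : ℝ) + 1 ≤ (k σ' t : ℝ) := by exact_mod_cast h
        nlinarith
    exact chord_le_of_convexOn hconv hA0 hAB hx hcase
  -- linear sums agree since total load is fixed
  have hsumL : ∑ t, L (y σ t) = ∑ t, L (y σ' t) := by
    have hsub : ∀ τ : N → T, ∑ t, g * (y τ t - A)
        = g * (p * (Fintype.card N : ℝ) - (Fintype.card T : ℝ) * A) := by
      intro τ
      rw [← Finset.mul_sum, Finset.sum_sub_distrib, hsumy, Finset.sum_const,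
        Finset.card_univ, nsmul_eq_mul]
    simp only [hL]
    rw [Finset.sum_add_distrib, Finset.sum_add_distrib, hsub, hsub]
  calc ∑ t, y σ t * c (y σ t) = ∑ t, L (y σ t) := Finset.sum_congr rfl (fun t _ => hLσ t)
    _ = ∑ t, L (y σ' t) := hsumL
    _ ≤ ∑ t, y σ' t * c (y σ' t) := Finset.sum_le_sum (fun t _ => hLσ' t)
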